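/- Let N ≥ 1 be a natural number, x ∈ ℝ with sin x ≠ 0, and χ ∈ ℝ. Then Σ_{j=1}^N Σ_{l=1}^N [cos²((j−l)x) + χ² sin²((j−l)x)] = (1/(4 sin² x))·[(1−χ²)(1 − cos(2Nx)) + N²(1+χ²)(1 − cos(2x))]. Consequently, for the chiral-waveguide decoherence matrix Γ_{jl} = cos((j−l)x) − iχ sin((j−l)x) one has g²(0) = 1 − 2/N + (Σ_{j,l}|Γ_{jl}|²)/N² = (1/2)(3 + χ² − 4/N) + ((1−χ²)/(2N²))·sin²(Nx)/sin²(x). -/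

import Mathlib

open Complex Finset ComplexConjugate

lemma exp_ne_one' (x : ℝ) (hx : Real.sin x ≠ 0) : Complex.exp ((2*x : ℝ) * I) ≠ 1 := by
  intro h
  rw [Complex.exp_eq_one_iff] at h
  obtain ⟨n, hn⟩ := h
  have h2 : ((2*x : ℝ) : ℂ) * I = ((n * (2 * Real.pi) : ℝ) : ℂ) * I := by
    push_cast
    push_cast at hn
    linear_combination hn
  have h3 : ((2*x : ℝ) : ℂ) = ((n * (2 * Real.pi) : ℝ) : ℂ) :=
    mul_right_cancel₀ Complex.I_ne_zero h2
  have : (2*x : ℝ) = n * (2 * Real.pi) := by exact_mod_cast h3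
  have hx' : x = n * Real.pi := by linarith
  exact hx (hx' ▸ Real.sin_int_mul_pi n)

lemma normSq_exp_sub_one (θ : ℝ) :
    Complex.normSq (Complex.exp ((θ : ℝ) * I) - 1) = 2 - 2 * Real.cos θ := by
  rw [Complex.exp_mul_I]
  simp [Complex.normSq_apply, Complex.cos_ofReal_re, Complex.sin_ofReal_re]
  nlinarith [Real.sin_sq_add_cos_sq θ]

lemma sum_cos_double (N : ℕ) (x : ℝ) (hx : Real.sin x ≠ 0) :
    ∑ j : Fin N, ∑ l : Fin N, Real.cos (((j.val : ℝ) - (l.val : ℝ)) * (2*x))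
      = Real.sin (N*x)^2 / Real.sin x ^ 2 := by
  set z := Complex.exp ((2*x : ℝ) * I) with hz
  have hz1 : z ≠ 1 := exp_ne_one' x hx
  have hsub : z - 1 ≠ 0 := sub_ne_zero.mpr hz1
  have hterm : ∀ j l : ℕ,
      (z ^ j * conj (z ^ l)).re = Real.cos (((j : ℝ) - (l : ℝ)) * (2*x)) := by
    intro j l
    rw [hz, ← Complex.exp_nat_mul, ← Complex.exp_nat_mul, ← Complex.exp_conj, ← Complex.exp_add]
    have hc : conj ((l : ℂ) * (((2*x : ℝ) : ℂ) * I)) = -((l : ℂ) * (((2*x : ℝ) : ℂ) * I)) := by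
      simp only [map_mul, Complex.conj_I, Complex.conj_natCast, Complex.conj_ofReal]
      ring
    rw [hc]
    have : (j : ℂ) * (((2*x : ℝ) : ℂ) * I) + -((l : ℂ) * (((2*x : ℝ) : ℂ) * I))
        = ((((j : ℝ) - (l : ℝ)) * (2*x) : ℝ) : ℂ) * I := by push_cast; ring
    rw [this, Complex.exp_ofReal_mul_I_re]
  set S : ℂ := ∑ j : Fin N, z ^ (j.val) with hS
  have h1 : ∑ j : Fin N, ∑ l : Fin N, Real.cos (((j.val : ℝ) - (l.val : ℝ)) * (2*x))
      = (S * conj S).re := by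
    have : S * conj S = ∑ j : Fin N, ∑ l : Fin N, z ^ (j.val) * conj (z ^ (l.val)) := by
      rw [hS, map_sum, Finset.sum_mul_sum]
    rw [this, Complex.re_sum]
    refine Finset.sum_congr rfl fun j _ => ?_
    rw [Complex.re_sum]
    exact Finset.sum_congr rfl fun l _ => (hterm j.val l.val).symm
  have h2 : (S * conj S).re = Complex.normSq S := by
    rw [Complex.mul_conj]
    simp
  have h3 : S = (z ^ N - 1) / (z - 1) := by
    rw [hS, Fin.sum_univ_eq_sum_range (fun i => z ^ i), geom_sum_eq hz1]
  have h4 : Complex.normSq S = (2 - 2 * Real.cos (2 * N * x)) / (2 - 2 * Real.cos (2 * x)) := by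
    rw [h3, map_div₀]
    have hN' : z ^ N - 1 = Complex.exp (((2 * N * x : ℝ) : ℂ) * I) - 1 := by
      rw [hz, ← Complex.exp_nat_mul]
      congr 1
      push_cast
      ring
    have hzz : z - 1 = Complex.exp (((2 * x : ℝ) : ℂ) * I) - 1 := by rw [hz]
    rw [hN', hzz, normSq_exp_sub_one, normSq_exp_sub_one]
  have hc2 : Real.cos (2 * x) = 1 - 2 * Real.sin x ^ 2 := by
    rw [Real.cos_two_mul]; nlinarith [Real.sin_sq_add_cos_sq x]
  have hcN : Real.cos (2 * N * x) = 1 - 2 * Real.sin (N * x) ^ 2 := by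
    have : (2 : ℝ) * N * x = 2 * (N * x) := by ring
    rw [this, Real.cos_two_mul]; nlinarith [Real.sin_sq_add_cos_sq (N * x)]
  have hs2 : Real.sin x ^ 2 ≠ 0 := pow_ne_zero 2 hx
  have h40 : (2 - 2 * (1 - 2 * Real.sin x ^ 2)) ≠ 0 := by
    intro h; apply hs2; linarith
  rw [h1, h2, h4, hc2, hcN, div_eq_div_iff h40 hs2]
  ring


/-- For `sin x ≠ 0`,
`Σ_{j,l=1}^N [cos²((j−l)x) + χ² sin²((j−l)x)]
  = (1/(4sin²x))[(1−χ²)(1 − cos(2Nx)) + N²(1+χ²)(1 − cos(2x))]`, and for the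
chiral-waveguide decoherence matrix `Γ_{jl} = cos((j−l)x) − iχ sin((j−l)x)`,
`g²(0) = (1/2)(3 + χ² − 4/N) + ((1−χ²)/(2N²)) sin²(Nx)/sin²(x)`. -/
theorem g2_chiral_waveguide (N : ℕ) (hN : 1 ≤ N) (x χ : ℝ) (hx : Real.sin x ≠ 0)
    (Γ : Matrix (Fin N) (Fin N) ℂ)
    (hΓ : Γ = Matrix.of fun j l : Fin N =>
      (Real.cos (((j.val : ℝ) - (l.val : ℝ)) * x) : ℂ)
        - Complex.I * χ * (Real.sin (((j.val : ℝ) - (l.val : ℝ)) * x) : ℂ)) :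
    (∑ j : Fin N, ∑ l : Fin N,
        (Real.cos (((j.val : ℝ) - (l.val : ℝ)) * x) ^ 2
          + χ ^ 2 * Real.sin (((j.val : ℝ) - (l.val : ℝ)) * x) ^ 2))
      = (1 / (4 * Real.sin x ^ 2)) *
          ((1 - χ ^ 2) * (1 - Real.cos (2 * N * x))
            + (N : ℝ) ^ 2 * (1 + χ ^ 2) * (1 - Real.cos (2 * x))) ∧
    1 - 2 / N + (∑ j : Fin N, ∑ l : Fin N, ‖Γ j l‖ ^ 2) / (N : ℝ) ^ 2
      = (1 / 2) * (3 + χ ^ 2 - 4 / N)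
        + ((1 - χ ^ 2) / (2 * (N : ℝ) ^ 2)) *
            (Real.sin (N * x) ^ 2 / Real.sin x ^ 2) := by
  have hs2 : Real.sin x ^ 2 ≠ 0 := pow_ne_zero 2 hx
  have hNR : (N : ℝ) ≠ 0 := Nat.cast_ne_zero.mpr (by omega)
  -- pointwise identity
  have hpt : ∀ j l : Fin N,
      Real.cos (((j.val : ℝ) - (l.val : ℝ)) * x) ^ 2
        + χ ^ 2 * Real.sin (((j.val : ℝ) - (l.val : ℝ)) * x) ^ 2
      = (1 + χ ^ 2) / 2 + (1 - χ ^ 2) / 2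
          * Real.cos (((j.val : ℝ) - (l.val : ℝ)) * (2 * x)) := by
    intro j l
    set θ := ((j.val : ℝ) - (l.val : ℝ)) * x with hθ
    have h2θ : ((j.val : ℝ) - (l.val : ℝ)) * (2 * x) = 2 * θ := by rw [hθ]; ring
    rw [h2θ, Real.cos_two_mul]
    nlinarith [Real.sin_sq_add_cos_sq θ]
  have hsum : (∑ j : Fin N, ∑ l : Fin N,
        (Real.cos (((j.val : ℝ) - (l.val : ℝ)) * x) ^ 2
          + χ ^ 2 * Real.sin (((j.val : ℝ) - (l.val : ℝ)) * x) ^ 2))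
      = (N : ℝ) ^ 2 * ((1 + χ ^ 2) / 2)
        + (1 - χ ^ 2) / 2 * (Real.sin (N * x) ^ 2 / Real.sin x ^ 2) := by
    have := sum_cos_double N x hx
    calc (∑ j : Fin N, ∑ l : Fin N,
        (Real.cos (((j.val : ℝ) - (l.val : ℝ)) * x) ^ 2
          + χ ^ 2 * Real.sin (((j.val : ℝ) - (l.val : ℝ)) * x) ^ 2))
        = ∑ j : Fin N, ∑ l : Fin N, ((1 + χ ^ 2) / 2 + (1 - χ ^ 2) / 2
            * Real.cos (((j.val : ℝ) - (l.val : ℝ)) * (2 * x))) := by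
          exact Finset.sum_congr rfl fun j _ => Finset.sum_congr rfl fun l _ => hpt j l
      _ = (N : ℝ) ^ 2 * ((1 + χ ^ 2) / 2)
          + (1 - χ ^ 2) / 2 * ∑ j : Fin N, ∑ l : Fin N,
              Real.cos (((j.val : ℝ) - (l.val : ℝ)) * (2 * x)) := by
          simp only [Finset.sum_add_distrib, Finset.sum_const, Finset.card_univ,
            Fintype.card_fin, nsmul_eq_mul, ← Finset.mul_sum]
          ring
      _ = _ := by rw [this]
  have hc2 : Real.cos (2 * x) = 1 - 2 * Real.sin x ^ 2 := by
    rw [Real.cos_two_mul]; nlinarith [Real.sin_sq_add_cos_sq x]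
  have hcN : Real.cos (2 * N * x) = 1 - 2 * Real.sin (N * x) ^ 2 := by
    have h : (2 : ℝ) * N * x = 2 * ((N : ℝ) * x) := by ring
    rw [h, Real.cos_two_mul]; nlinarith [Real.sin_sq_add_cos_sq ((N : ℝ) * x)]
  constructor
  · rw [hsum, hc2, hcN]
    field_simp
    ring
  · have habs : ∀ j l : Fin N, ‖Γ j l‖ ^ 2
        = Real.cos (((j.val : ℝ) - (l.val : ℝ)) * x) ^ 2
          + χ ^ 2 * Real.sin (((j.val : ℝ) - (l.val : ℝ)) * x) ^ 2 := by
      intro j l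
      rw [hΓ]
      rw [Complex.sq_norm]
      simp only [Matrix.of_apply, Complex.normSq_apply, Complex.sub_re, Complex.sub_im,
        Complex.mul_re, Complex.mul_im, Complex.I_re, Complex.I_im, Complex.ofReal_re,
        Complex.ofReal_im]
      ring
    have : (∑ j : Fin N, ∑ l : Fin N, ‖Γ j l‖ ^ 2)
        = (N : ℝ) ^ 2 * ((1 + χ ^ 2) / 2)
          + (1 - χ ^ 2) / 2 * (Real.sin (N * x) ^ 2 / Real.sin x ^ 2) := by
      rw [← hsum]
      exact Finset.sum_congr rfl fun j _ => Finset.sum_congr rfl fun l _ => habs j l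
    rw [this]
    field_simp
    ring
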